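/- Let f ≥ 1 and L ≥ 1 be integers. Then |𝒟_f| ≤ n²·(2L+2)^f; that is, the number of distinct paths that arise as a contiguous subpath of exactly L edges of the unique shortest path P_G(s,t,F), over all s,t ∈ V and all F ⊆ V ∪ E with |F| ≤ f, is at most n²·(2L+2)^f. (With the paper's parameter L = n^{ε/f}, this gives |𝒟_f| = O(n^{2+ε}).) -/

import Mathlib

open scoped ENNReal

namespace DSO

variable {V : Type*}

/-- `p` is a walk from `u` to `w` in the graph with edge relation `E`:
a nonempty list of vertices, consecutive vertices joined by edges. -/
def IsWalk (E : V → V → Prop) (p : List V) (u w : V) : Prop :=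
  p ≠ [] ∧ p.head? = some u ∧ p.getLast? = some w ∧ p.Chain' E

/-- The number of edges of a path given as a list of vertices. -/
def pathLen (p : List V) : ℕ := p.length - 1

/-- Total weight of a path, for real edge weights `w`. -/
def wt (w : V → V → ℝ) : List V → ℝ
  | [] => 0
  | [_] => 0
  | a :: b :: rest => w a b + wt w (b :: rest)

/-- Total weight of a path, for `ℝ≥0∞`-valued edge weights `w`. -/
noncomputable def ewt (w : V → V → ℝ≥0∞) : List V → ℝ≥0∞
  | [] => 0
  | [_] => 0
  | a :: b :: rest => w a b + ewt w (b :: rest)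

/-- A failure set `F ⊆ V ∪ E` is modelled as a set in `V ⊕ V × V`.
`IsFWalk E F p u w`: `p` is a `u`-to-`w` walk in `G ∖ F`, i.e. it uses no failed edge and
visits no failed vertex. -/
def IsFWalk (E : V → V → Prop) (F : Set (V ⊕ V × V)) (p : List V) (u w : V) : Prop :=
  IsWalk (fun a b => E a b ∧ Sum.inr (a, b) ∉ F) p u w ∧ ∀ x ∈ p, Sum.inl x ∉ F

/-- `d_G(u, x, F)`: the minimum weight of a `u`-to-`x` path in `G ∖ F` (`⊤` if none). -/
noncomputable def fdist (E : V → V → Prop) (w : V → V → ℝ) (F : Set (V ⊕ V × V))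
    (u x : V) : ℝ≥0∞ :=
  sInf ((fun p => ENNReal.ofReal (wt w p)) '' {p | IsFWalk E F p u x})

/-- `d^L_G(u, x, F)`: the minimum weight of a `u`-to-`x` path in `G ∖ F` containing at most
`L` edges (`⊤` if none). -/
noncomputable def fdistL (E : V → V → Prop) (w : V → V → ℝ) (F : Set (V ⊕ V × V))
    (L : ℕ) (u x : V) : ℝ≥0∞ :=
  sInf ((fun p => ENNReal.ofReal (wt w p)) '' {p | IsFWalk E F p u x ∧ pathLen p ≤ L})

/-- Weighted distance in an abstract `ℝ≥0∞`-weighted digraph `(E, w)`. -/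
noncomputable def ewdist (E : V → V → Prop) (w : V → V → ℝ≥0∞) (u x : V) : ℝ≥0∞ :=
  sInf ((fun p => ewt w p) '' {p | IsWalk E p u x})

/-- `𝒟_f`: the family of all contiguous subpaths with exactly `L` edges of the (unique)
shortest paths `P_G(s,t,F)`, over all `s, t ∈ V` and all `F ⊆ V ∪ E` with `|F| ≤ f`. -/
def Dfam (E : V → V → Prop) (w : V → V → ℝ) (f L : ℕ) : Set (List V) :=
  {Q | ∃ (s t : V) (F : Set (V ⊕ V × V)) (Pst : List V),
      F.Finite ∧ F.ncard ≤ f ∧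
      IsFWalk E F Pst s t ∧ ENNReal.ofReal (wt w Pst) = fdist E w F s t ∧
      Q <:+: Pst ∧ pathLen Q = L ∧ Q ≠ []}

end DSO

namespace Stmt13Aux

variable {V : Type*}

theorem wt_nonneg (w : V → V → ℝ) (hw : ∀ a b, 0 ≤ w a b) : ∀ p : List V, 0 ≤ DSO.wt w p
  | [] => le_refl 0
  | [_] => le_refl 0
  | _ :: b :: rest => add_nonneg (hw _ _) (wt_nonneg w hw (b :: rest))

theorem wt_append_cons (w : V → V → ℝ) (v : V) (l' : List V) :
    ∀ l : List V, DSO.wt w (l ++ v :: l') = DSO.wt w (l ++ [v]) + DSO.wt w (v :: l')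
  | [] => by simp [DSO.wt]
  | [a] => by simp [DSO.wt]
  | a :: c :: l => by
      have ih := wt_append_cons w v l' (c :: l)
      simp only [List.cons_append, DSO.wt, List.append_eq] at ih ⊢
      rw [ih]; ring

theorem wt_decomp (w : V → V → ℝ) (a b Q : List V) (u x : V)
    (h1 : Q.head? = some u) (h2 : Q.getLast? = some x) :
    DSO.wt w (a ++ Q ++ b) = DSO.wt w (a ++ [u]) + DSO.wt w Q + DSO.wt w (x :: b) := by
  have hne : Q ≠ [] := by rintro rfl; simp at h1
  obtain ⟨Q2, y, rfl⟩ : ∃ Q2 y, Q = Q2 ++ [y] := by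
    induction Q using List.reverseRecOn with
    | nil => simp at h1
    | append_singleton l' a _ => exact ⟨l', a, rfl⟩
  have hy : y = x := by
    rw [List.getLast?_append] at h2; simpa using h2
  subst hy
  cases Q2 with
  | nil =>
    simp only [List.head?] at h1
    simp only [List.nil_append] at h1 ⊢
    injection h1 with h1; subst h1
    rw [List.append_assoc, List.singleton_append, wt_append_cons]
    simp [DSO.wt]
  | cons q Q3 =>
    have hq : u = q := by
      have := h1; simp at this; exact this.symm
    subst hq
    have e1 : a ++ (u :: Q3 ++ [y]) ++ b = a ++ u :: (Q3 ++ [y] ++ b) := by simp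
    rw [e1, wt_append_cons w u (Q3 ++ [y] ++ b) a]
    have e2 : u :: (Q3 ++ [y] ++ b) = (u :: Q3) ++ y :: b := by simp
    rw [e2, wt_append_cons w y b (u :: Q3)]
    have e3 : (u :: Q3) ++ [y] = u :: Q3 ++ [y] := by simp
    rw [e3]
    ring

theorem IsFWalk_mono {E : V → V → Prop} {F F' : Set (V ⊕ V × V)} {p : List V} {u x : V}
    (hsub : F' ⊆ F) (h : DSO.IsFWalk E F p u x) : DSO.IsFWalk E F' p u x := by
  obtain ⟨⟨hne, hh, hl, hc⟩, hm⟩ := h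
  exact ⟨⟨hne, hh, hl, hc.imp fun a b hab => ⟨hab.1, fun hin => hab.2 (hsub hin)⟩⟩,
    fun v hv hin => hm v hv (hsub hin)⟩

theorem splice {E : V → V → Prop} {F : Set (V ⊕ V × V)} {a b Q R : List V} {s t u x : V}
    (hP : DSO.IsFWalk E F (a ++ Q ++ b) s t)
    (hu : Q.head? = some u) (hx : Q.getLast? = some x)
    (hR : DSO.IsFWalk E F R u x) :
    DSO.IsFWalk E F (a ++ R ++ b) s t := by
  obtain ⟨⟨hne, hh, hl, hc⟩, hm⟩ := hP
  obtain ⟨⟨hneR, hhR, hlR, hcR⟩, hmR⟩ := hR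
  have hQne : Q ≠ [] := by rintro rfl; simp at hu
  constructor
  · refine ⟨by simp [hneR], ?_, ?_, ?_⟩
    · have e : (a ++ R ++ b).head? = (a ++ Q ++ b).head? := by
        simp only [List.append_assoc, List.head?_append, hhR, hu]
      rw [e]; exact hh
    · have e : (a ++ R ++ b).getLast? = (a ++ Q ++ b).getLast? := by
        simp only [List.append_assoc, List.getLast?_append, hlR, hx]
      rw [e]; exact hl
    · unfold List.Chain' at hc ⊢; rw [List.append_assoc, List.isChain_append, List.isChain_append] at hc ⊢
      obtain ⟨hca, ⟨hcQ, hcb, hjQb⟩, hjab⟩ := hc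
      refine ⟨hca, ⟨hcR, hcb, ?_⟩, ?_⟩
      · intro y hy z hz
        simp only [hlR, Option.mem_some_iff] at hy
        rw [← hy]
        exact hjQb x (by simp [hx]) z hz
      · intro y hy z hz
        simp only [List.head?_append, hhR] at hz
        simp only [Option.mem_def, Option.or_eq_some_iff, Option.some.injEq] at hz
        have hz' : z = u := by
          rcases hz with h | h
          · exact h.symm
          · exact absurd h.1 (by simp)
        rw [hz']
        exact hjab y hy u (by simp [List.head?_append, hu])
  · intro v hv
    simp only [List.append_assoc, List.mem_append] at hv
    rcases hv with hv | hv | hv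
    · exact hm v (by simp [hv])
    · exact hmR v hv
    · exact hm v (by simp [hv])

/-- A contiguous subpath `Q` of a shortest path `Pst` achieves `fdistL` between its endpoints. -/
theorem subpath_opt {E : V → V → Prop} {w : V → V → ℝ} (hw : ∀ a b, 0 ≤ w a b)
    {F : Set (V ⊕ V × V)} {Pst Q : List V} {s t : V}
    (hPw : DSO.IsFWalk E F Pst s t)
    (hPd : ENNReal.ofReal (DSO.wt w Pst) = DSO.fdist E w F s t)
    (hinf : Q <:+: Pst) (hQne : Q ≠ []) (L : ℕ) (hQL : DSO.pathLen Q ≤ L) :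
    DSO.IsFWalk E F Q (Q.head hQne) (Q.getLast hQne) ∧
    ENNReal.ofReal (DSO.wt w Q) =
      DSO.fdistL E w F L (Q.head hQne) (Q.getLast hQne) := by
  obtain ⟨a, b, hab⟩ := hinf
  set u := Q.head hQne with hu
  set x := Q.getLast hQne with hxx
  have hu' : Q.head? = some u := List.head?_eq_head hQne
  have hx' : Q.getLast? = some x := List.getLast?_eq_getLast hQne
  have hQwalk : DSO.IsFWalk E F Q u x := by
    obtain ⟨⟨hne, hh, hl, hc⟩, hm⟩ := hPw
    refine ⟨⟨hQne, hu', hx', hc.infix ⟨a, b, hab⟩⟩, fun v hv => hm v ?_⟩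
    rw [← hab]; simp [hv]
  refine ⟨hQwalk, le_antisymm ?_ ?_⟩
  · apply le_sInf
    rintro _ ⟨R, ⟨hRw, hRL⟩, rfl⟩
    apply ENNReal.ofReal_le_ofReal
    -- splice R into Pst
    have hW : DSO.IsFWalk E F (a ++ R ++ b) s t := by
      rw [← hab] at hPw
      exact splice hPw hu' hx' hRw
    have h1 : ENNReal.ofReal (DSO.wt w Pst) ≤ ENNReal.ofReal (DSO.wt w (a ++ R ++ b)) := by
      rw [hPd]
      exact sInf_le ⟨a ++ R ++ b, hW, rfl⟩
    have h2 : DSO.wt w Pst ≤ DSO.wt w (a ++ R ++ b) :=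
      (ENNReal.ofReal_le_ofReal_iff (wt_nonneg w hw _)).mp h1
    have hRu : R.head? = some u := hRw.1.2.1
    have hRx : R.getLast? = some x := hRw.1.2.2.1
    have e1 : DSO.wt w Pst = DSO.wt w (a ++ [u]) + DSO.wt w Q + DSO.wt w (x :: b) := by
      rw [← hab]; exact wt_decomp w a b Q u x hu' hx'
    have e2 : DSO.wt w (a ++ R ++ b)
        = DSO.wt w (a ++ [u]) + DSO.wt w R + DSO.wt w (x :: b) :=
      wt_decomp w a b R u x hRu hRx
    rw [e1, e2] at h2
    linarith
  · exact sInf_le ⟨Q, ⟨hQwalk, hQL⟩, rfl⟩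

/-- Existence of a minimiser of `fdistL` (bounded-length walks over a finite vertex set
form a finite set). -/
theorem optP_exists [Finite V] (E : V → V → Prop) (w : V → V → ℝ) (L : ℕ)
    (F : Set (V ⊕ V × V)) (u x : V)
    (hne : ∃ p, DSO.IsFWalk E F p u x ∧ DSO.pathLen p ≤ L) :
    ∃ p, (DSO.IsFWalk E F p u x ∧ DSO.pathLen p ≤ L) ∧
      ENNReal.ofReal (DSO.wt w p) = DSO.fdistL E w F L u x := by
  set S := {p : List V | DSO.IsFWalk E F p u x ∧ DSO.pathLen p ≤ L} with hS
  have hSfin : S.Finite := by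
    apply (List.finite_length_le V (L + 1)).subset
    intro p hp
    have h2 := hp.2
    simp only [DSO.pathLen] at h2
    simp only [Set.mem_setOf_eq]
    omega
  have h1 : ((fun p => ENNReal.ofReal (DSO.wt w p)) '' S).Nonempty :=
    ⟨_, ⟨hne.choose, hne.choose_spec, rfl⟩⟩
  have h2 := Set.Nonempty.csInf_mem h1 (hSfin.image _)
  obtain ⟨p, hp, hval⟩ := h2
  exact ⟨p, hp, hval⟩

open Classical in
/-- The canonical minimiser of `fdistL` (junk value `[]` if none exists). -/
noncomputable def optP (E : V → V → Prop) (w : V → V → ℝ) (L : ℕ)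
    (F : Set (V ⊕ V × V)) (u x : V) : List V :=
  if h : ∃ p, (DSO.IsFWalk E F p u x ∧ DSO.pathLen p ≤ L) ∧
      ENNReal.ofReal (DSO.wt w p) = DSO.fdistL E w F L u x
  then h.choose else []

theorem optP_spec [Finite V] (E : V → V → Prop) (w : V → V → ℝ) (L : ℕ)
    (F : Set (V ⊕ V × V)) (u x : V)
    (hne : ∃ p, DSO.IsFWalk E F p u x ∧ DSO.pathLen p ≤ L) :
    (DSO.IsFWalk E F (optP E w L F u x) u x ∧ DSO.pathLen (optP E w L F u x) ≤ L) ∧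
      ENNReal.ofReal (DSO.wt w (optP E w L F u x)) = DSO.fdistL E w F L u x := by
  have h := optP_exists E w L F u x hne
  rw [optP, dif_pos h]
  exact h.choose_spec

/-- Selector: decodes a code into a (sub-singleton) set of failed elements on a path `p`. -/
def sel (L : ℕ) (p : List V) : Option (Fin (L+1) ⊕ Fin L) → Set (V ⊕ V × V)
  | none => ∅
  | some (Sum.inl j) => {g | ∃ h : (j : ℕ) < p.length, g = Sum.inl (p.get ⟨j, h⟩)}
  | some (Sum.inr j) => {g | ∃ h : (j : ℕ) + 1 < p.length,
      g = Sum.inr (p.get ⟨j, Nat.lt_of_succ_lt h⟩, p.get ⟨(j : ℕ) + 1, h⟩)}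

/-- `g` lies on the path `p` (as a vertex, or as a consecutive edge). -/
def onP (p : List V) : V ⊕ V × V → Prop
  | Sum.inl v => v ∈ p
  | Sum.inr e => ∃ i, ∃ h : i + 1 < p.length,
      p.get ⟨i, Nat.lt_of_succ_lt h⟩ = e.1 ∧ p.get ⟨i + 1, h⟩ = e.2

theorem sel_exists {L : ℕ} {p : List V} (hlen : p.length ≤ L + 1) {g : V ⊕ V × V}
    (hg : onP p g) : ∃ c, sel L p c = {g} := by
  match g with
  | Sum.inl v =>
    obtain ⟨⟨i, hi⟩, hget⟩ := List.mem_iff_get.mp hg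
    refine ⟨some (Sum.inl ⟨i, by omega⟩), ?_⟩
    ext g'
    simp only [sel, Set.mem_setOf_eq, Set.mem_singleton_iff]
    constructor
    · rintro ⟨h, rfl⟩
      rw [← hget]
    · rintro rfl
      exact ⟨by simpa using hi, by rw [← hget]⟩
  | Sum.inr e =>
    obtain ⟨ea, eb⟩ := e
    obtain ⟨i, h, h1, h2⟩ := hg
    simp only at h1 h2
    refine ⟨some (Sum.inr ⟨i, by omega⟩), ?_⟩
    ext g'
    simp only [sel, Set.mem_setOf_eq, Set.mem_singleton_iff]
    constructor
    · rintro ⟨h', rfl⟩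
      rw [h1, h2]
    · rintro rfl
      refine ⟨by simpa using h, ?_⟩
      rw [h1, h2]

theorem fdistL_anti (E : V → V → Prop) (w : V → V → ℝ) {F F' : Set (V ⊕ V × V)}
    (h : F' ⊆ F) (L : ℕ) (u x : V) :
    DSO.fdistL E w F' L u x ≤ DSO.fdistL E w F L u x := by
  apply sInf_le_sInf
  apply Set.image_mono
  exact fun p hp => ⟨IsFWalk_mono h hp.1, hp.2⟩

/-- There is an unrecorded failure on the current path. -/
def Cond (E : V → V → Prop) (w : V → V → ℝ) (L : ℕ) (u x : V)
    (Fstar F : Set (V ⊕ V × V)) : Prop :=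
  ∃ gc : (V ⊕ V × V) × Option (Fin (L+1) ⊕ Fin L),
    gc.1 ∈ Fstar ∧ gc.1 ∉ F ∧ sel L (optP E w L F u x) gc.2 = {gc.1}

open Classical in
noncomputable def encStep (E : V → V → Prop) (w : V → V → ℝ) (L : ℕ) (u x : V)
    (Fstar F : Set (V ⊕ V × V)) : Set (V ⊕ V × V) × Option (Fin (L+1) ⊕ Fin L) :=
  if h : Cond E w L u x Fstar F
  then (insert h.choose.1 F, h.choose.2)
  else (F, none)

noncomputable def encF (E : V → V → Prop) (w : V → V → ℝ) (L : ℕ) (u x : V)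
    (Fstar : Set (V ⊕ V × V)) : ℕ → Set (V ⊕ V × V)
  | 0 => ∅
  | i + 1 => (encStep E w L u x Fstar (encF E w L u x Fstar i)).1

noncomputable def encσ (E : V → V → Prop) (w : V → V → ℝ) (L : ℕ) (u x : V)
    (Fstar : Set (V ⊕ V × V)) (i : ℕ) : Option (Fin (L+1) ⊕ Fin L) :=
  (encStep E w L u x Fstar (encF E w L u x Fstar i)).2

/-- The decoding chain of failure sets, a function of the code `σ` only. -/
noncomputable def FF (E : V → V → Prop) (w : V → V → ℝ) (L : ℕ) (u x : V)
    (σ : ℕ → Option (Fin (L+1) ⊕ Fin L)) : ℕ → Set (V ⊕ V × V)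
  | 0 => ∅
  | i + 1 => FF E w L u x σ i ∪ sel L (optP E w L (FF E w L u x σ i) u x) (σ i)

theorem FF_congr (E : V → V → Prop) (w : V → V → ℝ) (L : ℕ) (u x : V)
    {σ σ' : ℕ → Option (Fin (L+1) ⊕ Fin L)} :
    ∀ i, (∀ j < i, σ j = σ' j) → FF E w L u x σ i = FF E w L u x σ' i
  | 0, _ => rfl
  | i+1, h => by
      have ih := FF_congr E w L u x i (fun j hj => h j (by omega))
      simp only [FF, ih, h i (by omega)]

theorem FF_encσ (E : V → V → Prop) (w : V → V → ℝ) (L : ℕ) (u x : V)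
    (Fstar : Set (V ⊕ V × V)) :
    ∀ i, FF E w L u x (encσ E w L u x Fstar) i = encF E w L u x Fstar i
  | 0 => rfl
  | i+1 => by
      have ih := FF_encσ E w L u x Fstar i
      show FF E w L u x (encσ E w L u x Fstar) i ∪ _ = _
      rw [ih]
      show encF E w L u x Fstar i ∪
          sel L (optP E w L (encF E w L u x Fstar i) u x)
            (encStep E w L u x Fstar (encF E w L u x Fstar i)).2
        = (encStep E w L u x Fstar (encF E w L u x Fstar i)).1
      by_cases h : Cond E w L u x Fstar (encF E w L u x Fstar i)
      · rw [encStep, dif_pos h]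
        simp only
        rw [h.choose_spec.2.2, Set.union_singleton]
      · rw [encStep, dif_neg h]
        simp [sel]

theorem encF_subset (E : V → V → Prop) (w : V → V → ℝ) (L : ℕ) (u x : V)
    (Fstar : Set (V ⊕ V × V)) :
    ∀ i, encF E w L u x Fstar i ⊆ Fstar
  | 0 => by simp [encF]
  | i+1 => by
      have ih := encF_subset E w L u x Fstar i
      show (encStep E w L u x Fstar (encF E w L u x Fstar i)).1 ⊆ Fstar
      by_cases h : Cond E w L u x Fstar (encF E w L u x Fstar i)
      · rw [encStep, dif_pos h]
        exact Set.insert_subset h.choose_spec.1 ih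
      · rw [encStep, dif_neg h]
        exact ih

theorem encF_stable (E : V → V → Prop) (w : V → V → ℝ) (L : ℕ) (u x : V)
    (Fstar : Set (V ⊕ V × V)) (j : ℕ)
    (hstop : ¬ Cond E w L u x Fstar (encF E w L u x Fstar j)) :
    ∀ k, encF E w L u x Fstar (j + k) = encF E w L u x Fstar j
  | 0 => rfl
  | k+1 => by
      have ih := encF_stable E w L u x Fstar j hstop k
      show (encStep E w L u x Fstar (encF E w L u x Fstar (j + k))).1 = _
      rw [ih, encStep, dif_neg hstop]

theorem encF_card (E : V → V → Prop) (w : V → V → ℝ) (L : ℕ) (u x : V)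
    {Fstar : Set (V ⊕ V × V)} (hFfin : Fstar.Finite) :
    ∀ m, (∀ i < m, Cond E w L u x Fstar (encF E w L u x Fstar i)) →
      (encF E w L u x Fstar m).ncard = m
  | 0, _ => by simp [encF]
  | m+1, h => by
      have ih := encF_card E w L u x hFfin m (fun i hi => h i (by omega))
      have hc := h m (by omega)
      show ((encStep E w L u x Fstar (encF E w L u x Fstar m)).1).ncard = m + 1
      rw [encStep, dif_pos hc]
      simp only
      rw [Set.ncard_insert_of_notMem hc.choose_spec.2.1
        (hFfin.subset (encF_subset E w L u x Fstar m)), ih]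

set_option maxHeartbeats 1000000 in
theorem encode_main [Fintype V]
    (E : V → V → Prop) (w : V → V → ℝ) (hw : ∀ a b, 0 ≤ w a b)
    (f L : ℕ)
    (huniqL : ∀ (u x : V) (F : Set (V ⊕ V × V)), F.Finite → F.ncard ≤ f → ∀ L' : ℕ,
      ∀ p q : List V,
        DSO.IsFWalk E F p u x → DSO.pathLen p ≤ L' →
          ENNReal.ofReal (DSO.wt w p) = DSO.fdistL E w F L' u x →
        DSO.IsFWalk E F q u x → DSO.pathLen q ≤ L' →
          ENNReal.ofReal (DSO.wt w q) = DSO.fdistL E w F L' u x →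
        p = q)
    (Q : List V) (hQ : Q ∈ DSO.Dfam E w f L) :
    ∃ (u x : V) (σ : ℕ → Option (Fin (L+1) ⊕ Fin L)),
      optP E w L (FF E w L u x σ f) u x = Q := by
  obtain ⟨s, t, Fs, Pst, hFfin, hFcard, hPw, hPd, hinf, hQlen, hQne⟩ := hQ
  refine ⟨Q.head hQne, Q.getLast hQne, encσ E w L (Q.head hQne) (Q.getLast hQne) Fs, ?_⟩
  set u := Q.head hQne with hu
  set x := Q.getLast hQne with hx
  rw [FF_encσ]
  have hQL : DSO.pathLen Q ≤ L := le_of_eq hQlen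
  obtain ⟨hQwalk, hQopt⟩ := subpath_opt hw hPw hPd hinf hQne L hQL
  have hcand : ∀ F' : Set (V ⊕ V × V), F' ⊆ Fs →
      ∃ p, DSO.IsFWalk E F' p u x ∧ DSO.pathLen p ≤ L :=
    fun F' hsub => ⟨Q, IsFWalk_mono hsub hQwalk, hQL⟩
  have hEsub : ∀ i, encF E w L u x Fs i ⊆ Fs := encF_subset E w L u x Fs
  by_cases hA : ∀ i < f, Cond E w L u x Fs (encF E w L u x Fs i)
  · -- all steps pick a failure: `encF f = Fs`
    have hcards : (encF E w L u x Fs f).ncard = f := encF_card E w L u x hFfin f hA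
    have heq : encF E w L u x Fs f = Fs :=
      Set.eq_of_subset_of_ncard_le (hEsub f) (by rw [hcards]; exact hFcard) hFfin
    rw [heq]
    obtain ⟨⟨h1, h2⟩, h3⟩ := optP_spec E w L Fs u x (hcand Fs subset_rfl)
    exact huniqL u x Fs hFfin hFcard L _ Q h1 h2 h3 hQwalk hQL hQopt
  · push_neg at hA
    obtain ⟨j, hj, hstop⟩ := hA
    have heq : encF E w L u x Fs f = encF E w L u x Fs j := by
      have hfj : f = j + (f - j) := by omega
      rw [hfj]
      exact encF_stable E w L u x Fs j hstop (f - j)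
    rw [heq]
    set F' := encF E w L u x Fs j with hF'
    obtain ⟨⟨hPwalk, hPlen⟩, hPopt⟩ := optP_spec E w L F' u x (hcand F' (hEsub j))
    set P := optP E w L F' u x with hP
    have hPne : P ≠ [] := hPwalk.1.1
    have hPlength : P.length ≤ L + 1 := by
      have h := hPlen; simp only [DSO.pathLen] at h; omega
    have hno : ∀ g, g ∈ Fs → g ∉ F' → ¬ onP P g := by
      intro g hg1 hg2 hg3
      obtain ⟨c, hc⟩ := sel_exists hPlength hg3
      exact hstop ⟨(g, c), hg1, hg2, hc⟩
    have hPFs : DSO.IsFWalk E Fs P u x := by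
      obtain ⟨⟨hne, hh, hl, hc⟩, hm⟩ := hPwalk
      constructor
      · refine ⟨hne, hh, hl, ?_⟩
        unfold List.Chain' at hc ⊢; rw [List.isChain_iff_getElem] at hc ⊢
        intro i hi
        obtain ⟨hE, hnF⟩ := hc i hi
        refine ⟨hE, ?_⟩
        intro hmem
        have hi1 : i + 1 < P.length := by omega
        by_cases hin : Sum.inr (P.get ⟨i, Nat.lt_of_succ_lt hi1⟩, P.get ⟨i + 1, hi1⟩) ∈ F'
        · exact hnF hin
        · exact hno _ hmem hin ⟨i, hi1, rfl, rfl⟩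
      · intro v hv hmem
        by_cases hin : Sum.inl v ∈ F'
        · exact hm v hv hin
        · exact hno _ hmem hin hv
    have hPval : ENNReal.ofReal (DSO.wt w P) = DSO.fdistL E w Fs L u x := by
      refine le_antisymm ?_ ?_
      · rw [hPopt]
        exact fdistL_anti E w (hEsub j) L u x
      · exact sInf_le ⟨P, ⟨hPFs, hPlen⟩, rfl⟩
    exact huniqL u x Fs hFfin hFcard L P Q hPFs hPlen hPval hQwalk hQL hQopt

end Stmt13Aux

/-- Under the unique-shortest-paths assumption, the family `𝒟_f` of all
contiguous `L`-edge subpaths of the shortest paths `P_G(s,t,F)` over all `s,t ∈ V` and all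
`F ⊆ V ∪ E` with `|F| ≤ f` is finite of cardinality at most `n²·(2L+2)^f`. -/
theorem stmt13 {V : Type*} [Fintype V]
    (E : V → V → Prop) (w : V → V → ℝ) (hw : ∀ a b, 0 ≤ w a b)
    (n : ℕ) (hn : Fintype.card V = n)
    (f L : ℕ) (hf : 1 ≤ f) (hL : 1 ≤ L)
    (huniq : ∀ (u x : V) (F : Set (V ⊕ V × V)), F.Finite → F.ncard ≤ f →
      ∀ p q : List V,
        DSO.IsFWalk E F p u x → ENNReal.ofReal (DSO.wt w p) = DSO.fdist E w F u x →
        DSO.IsFWalk E F q u x → ENNReal.ofReal (DSO.wt w q) = DSO.fdist E w F u x →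
        p = q)
    (huniqL : ∀ (u x : V) (F : Set (V ⊕ V × V)), F.Finite → F.ncard ≤ f → ∀ L' : ℕ,
      ∀ p q : List V,
        DSO.IsFWalk E F p u x → DSO.pathLen p ≤ L' →
          ENNReal.ofReal (DSO.wt w p) = DSO.fdistL E w F L' u x →
        DSO.IsFWalk E F q u x → DSO.pathLen q ≤ L' →
          ENNReal.ofReal (DSO.wt w q) = DSO.fdistL E w F L' u x →
        p = q) :
    (DSO.Dfam E w f L).Finite ∧
    (DSO.Dfam E w f L).ncard ≤ n ^ 2 * (2 * L + 2) ^ f := by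
  classical
  let ψ : V × V × (Fin f → Option (Fin (L+1) ⊕ Fin L)) → List V := fun k =>
    Stmt13Aux.optP E w L
      (Stmt13Aux.FF E w L k.1 k.2.1 (fun i => if h : i < f then k.2.2 ⟨i, h⟩ else none) f)
      k.1 k.2.1
  have hsub : DSO.Dfam E w f L ⊆ ψ '' Set.univ := by
    intro Q hQ
    obtain ⟨u, x, σ, hdec⟩ := Stmt13Aux.encode_main E w hw f L huniqL Q hQ
    refine ⟨(u, x, fun j => σ j), Set.mem_univ _, ?_⟩
    show Stmt13Aux.optP E w L (Stmt13Aux.FF E w L u x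
      (fun i => if h : i < f then σ i else none) f) u x = Q
    rw [Stmt13Aux.FF_congr E w L u x f (σ' := σ) (by intro j hj; simp [hj])]
    exact hdec
  have hfin : (ψ '' Set.univ).Finite := Set.finite_univ.image ψ
  have hDfin : (DSO.Dfam E w f L).Finite := hfin.subset hsub
  refine ⟨hDfin, ?_⟩
  have h1 : (DSO.Dfam E w f L).ncard ≤ (ψ '' Set.univ).ncard :=
    Set.ncard_le_ncard hsub hfin
  have h2 : (ψ '' Set.univ).ncard ≤
      (Set.univ : Set (V × V × (Fin f → Option (Fin (L+1) ⊕ Fin L)))).ncard :=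
    Set.ncard_image_le Set.finite_univ
  have h3 : (Set.univ : Set (V × V × (Fin f → Option (Fin (L+1) ⊕ Fin L)))).ncard
      = n ^ 2 * (2 * L + 2) ^ f := by
    rw [Set.ncard_univ, Nat.card_eq_fintype_card]
    simp [Fintype.card_prod, Fintype.card_fun, hn]
    ring
  exact h1.trans (h2.trans_eq h3)
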